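/- Let m ≥ 1 be an integer, p a real polynomial, and a a real number. Then for every real x, V_m((X − a)·p)(x) = ((x − a)² − m²)·V_m(p)(x) + V_{m−1}(p)(x), where (X − a)·p denotes the polynomial x ↦ (x − a)p(x). -/
import Mathlib

/-- `V m f x = ∑_{j=-m}^{m} (-1)^j f(x-j) f(x+j) / ((m-j)! (m+j)!)`. -/
noncomputable def V (m : ℕ) (f : ℝ → ℝ) (x : ℝ) : ℝ :=
  ∑ j ∈ Finset.Icc (-(m : ℤ)) (m : ℤ),
    (-1 : ℝ) ^ j * f (x - (j : ℝ)) * f (x + (j : ℝ)) /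
      ((((m : ℤ) - j).toNat.factorial : ℝ) * (((m : ℤ) + j).toNat.factorial : ℝ))

theorem stmt_6 (m : ℕ) (hm : 1 ≤ m) (p : Polynomial ℝ) (a : ℝ) (x : ℝ) :
    V m (fun y => (y - a) * p.eval y) x =
      ((x - a) ^ 2 - (m : ℝ) ^ 2) * V m (fun y => p.eval y) x +
        V (m - 1) (fun y => p.eval y) x := by
  have hc : ((m - 1 : ℕ) : ℤ) = (m : ℤ) - 1 := by omega
  unfold V
  rw [hc, ← sub_eq_iff_eq_add', Finset.mul_sum, ← Finset.sum_sub_distrib]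
  beta_reduce
  have hsub : Finset.Icc (-((m:ℤ) - 1)) ((m:ℤ) - 1) ⊆ Finset.Icc (-(m:ℤ)) (m:ℤ) := by
    intro j hj
    simp only [Finset.mem_Icc] at *
    omega
  refine ((Finset.sum_subset hsub ?_).symm).trans (Finset.sum_congr rfl ?_)
  · intro j hjS hjT
    simp only [Finset.mem_Icc] at hjS hjT
    have hj : j = (m:ℤ) ∨ j = -(m:ℤ) := by omega
    have hj2 : ((j:ℝ))^2 = (m:ℝ)^2 := by
      rcases hj with h | h <;> subst h <;> push_cast <;> ring
    generalize (-1:ℝ)^j = E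
    have hD : ((((m : ℤ) - j).toNat.factorial : ℝ) * (((m : ℤ) + j).toNat.factorial : ℝ)) ≠ 0 :=
      mul_ne_zero (Nat.cast_ne_zero.2 (Nat.factorial_ne_zero _))
        (Nat.cast_ne_zero.2 (Nat.factorial_ne_zero _))
    field_simp
    linear_combination (-E * p.eval (x - (j:ℝ)) * p.eval (x + (j:ℝ))) * hj2
  · intro j hj
    simp only [Finset.mem_Icc] at hj
    have h1 : ((m:ℤ) - j).toNat = ((m:ℤ) - 1 - j).toNat + 1 := by omega
    have h2 : ((m:ℤ) + j).toNat = ((m:ℤ) - 1 + j).toNat + 1 := by omega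
    rw [h1, h2, Nat.factorial_succ, Nat.factorial_succ]
    have e1 : ((((m:ℤ) - 1 - j).toNat : ℝ)) = (m:ℝ) - 1 - (j:ℝ) := by
      have h := Int.toNat_of_nonneg (show (0:ℤ) ≤ (m:ℤ) - 1 - j by omega)
      exact_mod_cast congrArg (fun z : ℤ => (z : ℝ)) h
    have e2 : ((((m:ℤ) - 1 + j).toNat : ℝ)) = (m:ℝ) - 1 + (j:ℝ) := by
      have h := Int.toNat_of_nonneg (show (0:ℤ) ≤ (m:ℤ) - 1 + j by omega)
      exact_mod_cast congrArg (fun z : ℤ => (z : ℝ)) h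
    have hf1 : ((((m:ℤ) - 1 - j).toNat.factorial : ℝ)) ≠ 0 :=
      Nat.cast_ne_zero.2 (Nat.factorial_ne_zero _)
    have hf2 : ((((m:ℤ) - 1 + j).toNat.factorial : ℝ)) ≠ 0 :=
      Nat.cast_ne_zero.2 (Nat.factorial_ne_zero _)
    have hmj1 : (m:ℝ) - 1 - (j:ℝ) + 1 ≠ 0 := by
      have : (1:ℤ) ≤ (m:ℤ) - j := by omega
      have : (1:ℝ) ≤ (m:ℝ) - (j:ℝ) := by exact_mod_cast this
      intro h; nlinarith
    have hmj2 : (m:ℝ) - 1 + (j:ℝ) + 1 ≠ 0 := by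
      have : (1:ℤ) ≤ (m:ℤ) + j := by omega
      have : (1:ℝ) ≤ (m:ℝ) + (j:ℝ) := by exact_mod_cast this
      intro h; nlinarith
    generalize (-1:ℝ)^j = E
    push_cast
    rw [e1, e2]
    field_simp
    ring
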